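/- Let r ≥ 2 and let p, p' be integers with 1 ≤ p ≤ r − 1 and p < p'. Let μ ∈ P_r, w ∈ S_r, and let τ ∈ S_r be the transposition swapping 1 and p+1. Define E(α,u) = (pp'/2)‖α‖² − p'⟨α,δ⟩ + p⟨α, u•δ⟩ − ⟨δ, u•δ − δ⟩. Then for every x ∈ ℚ there is a bijection between {α ∈ μ + Q_r : E(α, w) = x} and {α ∈ (τ•μ) + Q_r : E(α, τ∘w) = x}. (This expresses the identity Γ^{r,p,p';μ}_{0,0}(w) = −Γ^{r,p,p';(1,p+1)μ}_{0,0}((1,p+1)w) at the level of exponents, the sign coming from sign(τ∘w) = −sign(w).) -/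
import Mathlib


open Finset

noncomputable section

/-- Inner product `⟨u,v⟩ = Σ_i u i * v i` on `ℚ^r`. -/
def ip {r : ℕ} (u v : Fin r → ℚ) : ℚ := ∑ i, u i * v i

/-- Action of `S_r` permuting coordinates: `(w • v) i = v (w⁻¹ i)`. -/
def pact {r : ℕ} (w : Equiv.Perm (Fin r)) (v : Fin r → ℚ) : Fin r → ℚ := fun i => v (w⁻¹ i)

/-- The Weyl vector `δ`, whose (1-indexed) `i`-th coordinate is `(r+1-2i)/2`. -/
def weylδ (r : ℕ) : Fin r → ℚ := fun j => ((r : ℚ) - 1 - 2 * ((j : ℕ) : ℚ)) / 2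

/-- Membership in `V = {v : Fin r → ℚ | Σ_i v i = 0}`. -/
def memV {r : ℕ} (v : Fin r → ℚ) : Prop := ∑ i, v i = 0

/-- Membership in the root lattice `Q_r`. -/
def memQ {r : ℕ} (v : Fin r → ℚ) : Prop := memV v ∧ ∀ i, ∃ m : ℤ, v i = (m : ℚ)

/-- Membership in the weight lattice `P_r`. -/
def memP {r : ℕ} (v : Fin r → ℚ) : Prop := memV v ∧ ∀ i j, ∃ m : ℤ, v i - v j = (m : ℚ)

/-- The first fundamental weight `Λ₁ = ε₁ - (1/r)(ε₁ + ⋯ + ε_r)`. -/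
def Lam1 (r : ℕ) : Fin r → ℚ := fun j => (if (j : ℕ) = 0 then 1 else 0) - 1 / (r : ℚ)

/-- The simple roots, 0-indexed: `srootF i = ε_{i+1} - ε_{i+2}` in 1-indexed notation. -/
def srootF {r : ℕ} (i : Fin (r - 1)) : Fin r → ℚ :=
  fun j => (if (j : ℕ) = (i : ℕ) then 1 else 0) - (if (j : ℕ) = (i : ℕ) + 1 then 1 else 0)

/-- The highest root `θ = ε₁ - ε_r`. -/
def hroot (r : ℕ) : Fin r → ℚ :=
  fun j => (if (j : ℕ) = 0 then 1 else 0) - (if (j : ℕ) = r - 1 then 1 else 0)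

/-- The set `Π_{r,n}` of weights of `L_r(nΛ₁)`:
all `nΛ₁ - a₁α₁ - ⋯ - a_{r-1}α_{r-1}` with `n ≥ a₁ ≥ ⋯ ≥ a_{r-1} ≥ 0`. -/
def PiWts (r n : ℕ) : Set (Fin r → ℚ) :=
  {v | ∃ a : Fin (r - 1) → ℤ, (∀ i, 0 ≤ a i) ∧ (∀ i, a i ≤ (n : ℤ)) ∧
        (∀ i j, i ≤ j → a j ≤ a i) ∧
        v = (n : ℚ) • Lam1 r - ∑ i, (a i : ℚ) • srootF i}

/-- The exponent `E(α,w) = (pp'/2)‖α‖² - p'⟨α,δ⟩ + p⟨α,w•δ⟩ - ⟨δ, w•δ - δ⟩`. -/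
def Eexp (r p p' : ℕ) (α : Fin r → ℚ) (w : Equiv.Perm (Fin r)) : ℚ :=
  ((p : ℚ) * p' / 2) * ip α α - p' * ip α (weylδ r) + p * ip α (pact w (weylδ r))
    - ip (weylδ r) (pact w (weylδ r) - weylδ r)

namespace Stmt2Aux
def gamv (r p : ℕ) : Fin r → ℚ :=
  fun j => (if (j : ℕ) = 0 then 1 else 0) - (if (j : ℕ) = p then 1 else 0)
variable {r p : ℕ}

lemma ip_comm (u v : Fin r → ℚ) : ip u v = ip v u :=
  Finset.sum_congr rfl (fun i _ => mul_comm _ _)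
lemma ip_add_right (u v w : Fin r → ℚ) : ip u (v + w) = ip u v + ip u w := by
  unfold ip; simp [mul_add, Finset.sum_add_distrib]
lemma ip_sub_right (u v w : Fin r → ℚ) : ip u (v - w) = ip u v - ip u w := by
  unfold ip; simp [mul_sub, Finset.sum_sub_distrib]
lemma ip_smul_right (c : ℚ) (u v : Fin r → ℚ) : ip u (c • v) = c * ip u v := by
  unfold ip; rw [Finset.mul_sum]; exact Finset.sum_congr rfl (fun i _ => by simp; ring)
lemma ip_neg_right (u v : Fin r → ℚ) : ip u (-v) = - ip u v := by
  unfold ip; simp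
lemma ip_add_left (u v w : Fin r → ℚ) : ip (u + v) w = ip u w + ip v w := by
  rw [ip_comm, ip_add_right, ip_comm w u, ip_comm w v]
lemma pact_mul (σ τ : Equiv.Perm (Fin r)) (v : Fin r → ℚ) :
    pact (σ * τ) v = pact σ (pact τ v) := by
  funext i; simp [pact, mul_inv_rev]
lemma pact_add (σ : Equiv.Perm (Fin r)) (u v : Fin r → ℚ) :
    pact σ (u + v) = pact σ u + pact σ v := rfl
lemma pact_one (v : Fin r → ℚ) : pact 1 v = v := rfl
lemma ip_equiv (σ : Equiv.Perm (Fin r)) (u v : Fin r → ℚ) :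
    ip (pact σ u) (pact σ v) = ip u v := by
  unfold ip pact
  exact Equiv.sum_comp σ⁻¹ (fun j => u j * v j)
lemma ip_pact_left (σ : Equiv.Perm (Fin r)) (u v : Fin r → ℚ) :
    ip (pact σ u) v = ip u (pact σ⁻¹ v) := by
  unfold ip pact
  simp only [inv_inv]
  rw [← Equiv.sum_comp σ (fun i => u (σ⁻¹ i) * v i)]
  simp
lemma ip_gam_right (h0 : 0 < r) (hp : p < r) (u : Fin r → ℚ) :
    ip u (gamv r p) = u ⟨0, h0⟩ - u ⟨p, hp⟩ := by
  unfold ip gamv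
  simp only [show ∀ j : Fin r, ((j : ℕ) = 0) = (j = ⟨0, h0⟩) from fun j => by
      rw [Fin.ext_iff],
    show ∀ j : Fin r, ((j : ℕ) = p) = (j = ⟨p, hp⟩) from fun j => by
      rw [Fin.ext_iff]]
  simp [mul_sub, Finset.sum_sub_distrib, mul_ite, Finset.sum_ite_eq']
lemma pact_swap_gam (h0 : 0 < r) (hp : p < r) (hp1 : 1 ≤ p) :
    pact (Equiv.swap (⟨0, h0⟩ : Fin r) ⟨p, hp⟩) (gamv r p) = - gamv r p := by
  have hpne : p ≠ 0 := by omega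
  funext i
  simp only [pact, Equiv.swap_inv, gamv, Pi.neg_apply]
  rcases eq_or_ne i ⟨0, h0⟩ with h | h
  · subst h; simp only [Equiv.swap_apply_left]; simp [hpne, (Ne.symm hpne : ¬ 0 = p)]
  rcases eq_or_ne i ⟨p, hp⟩ with h2 | h2
  · subst h2; simp only [Equiv.swap_apply_right]; simp [hpne, (Ne.symm hpne : ¬ 0 = p)]
  · simp only [Equiv.swap_apply_of_ne_of_ne h h2]
    have t1 : (i : ℕ) ≠ 0 := by simpa [Fin.ext_iff] using h
    have t2 : (i : ℕ) ≠ p := by simpa [Fin.ext_iff] using h2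
    simp [t1, t2]
lemma pact_swap_weylδ (h0 : 0 < r) (hp : p < r) (hp1 : 1 ≤ p) :
    pact (Equiv.swap (⟨0, h0⟩ : Fin r) ⟨p, hp⟩) (weylδ r)
      = weylδ r - (p : ℚ) • gamv r p := by
  have hpne : p ≠ 0 := by omega
  funext i
  simp only [pact, Equiv.swap_inv, weylδ, gamv, Pi.sub_apply, Pi.smul_apply, smul_eq_mul]
  rcases eq_or_ne i ⟨0, h0⟩ with h | h
  · subst h; simp only [Equiv.swap_apply_left]; simp [hpne, (Ne.symm hpne : ¬ 0 = p)]; ring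
  rcases eq_or_ne i ⟨p, hp⟩ with h2 | h2
  · subst h2; simp only [Equiv.swap_apply_right]; simp [hpne, (Ne.symm hpne : ¬ 0 = p)]; ring
  · simp only [Equiv.swap_apply_of_ne_of_ne h h2]
    have t1 : (i : ℕ) ≠ 0 := by simpa [Fin.ext_iff] using h
    have t2 : (i : ℕ) ≠ p := by simpa [Fin.ext_iff] using h2
    simp [t1, t2]

lemma Eexp_key (r p p' : ℕ) (h0 : 0 < r) (hp : p < r) (hp1 : 1 ≤ p)
    (α : Fin r → ℚ) (w : Equiv.Perm (Fin r)) :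
    Eexp r p p' (pact (Equiv.swap (⟨0, h0⟩ : Fin r) ⟨p, hp⟩) α + gamv r p)
      (Equiv.swap (⟨0, h0⟩ : Fin r) ⟨p, hp⟩ * w) = Eexp r p p' α w := by
  unfold Eexp
  set τ := Equiv.swap (⟨0, h0⟩ : Fin r) (⟨p, hp⟩ : Fin r) with hτdef
  set G := gamv r p with hGdef
  set δ' := weylδ r with hδdef
  rw [pact_mul]
  set Y := pact w δ' with hYdef
  have hτi : τ⁻¹ = τ := Equiv.swap_inv _ _
  have hGτ : pact τ G = -G := pact_swap_gam h0 hp hp1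
  have hδτ : pact τ δ' = δ' - (p : ℚ) • G := pact_swap_weylδ h0 hp hp1
  have hpl : ∀ u v : Fin r → ℚ, ip (pact τ u) v = ip u (pact τ v) := fun u v => by
    rw [ip_pact_left, hτi]
  have hδ0 : δ' ⟨0, h0⟩ - δ' ⟨p, hp⟩ = (p : ℚ) := by
    simp only [hδdef, weylδ]
    push_cast; ring
  have hGδ : ip δ' G = (p : ℚ) := by rw [hGdef, ip_gam_right h0 hp]; exact hδ0
  have hGG : ip G G = 2 := by
    rw [hGdef, ip_gam_right h0 hp]
    have hpne : p ≠ 0 := by omega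
    simp [gamv, hpne, (Ne.symm hpne : ¬ 0 = p)]
    norm_num
  have hipAG : ip (pact τ α) G = - ip α G := by rw [hpl, hGτ, ip_neg_right]
  have h1 : ip (pact τ α + G) (pact τ α + G) = ip α α - 2 * ip α G + 2 := by
    rw [ip_add_left, ip_add_right, ip_add_right, ip_equiv, hipAG,
      ip_comm G (pact τ α), hipAG, hGG]; ring
  have h2 : ip (pact τ α + G) δ' = ip α δ' - (p : ℚ) * ip α G + (p : ℚ) := by
    rw [ip_add_left, hpl, hδτ, ip_sub_right, ip_smul_right, ip_comm G δ', hGδ]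
  have h3 : ip (pact τ α + G) (pact τ Y) = ip α Y - ip Y G := by
    rw [ip_add_left, ip_equiv, ip_comm G (pact τ Y), hpl, hGτ, ip_neg_right]; ring
  have h4 : ip δ' (pact τ Y - δ') = ip δ' Y - (p : ℚ) * ip Y G - ip δ' δ' := by
    rw [ip_sub_right, ip_comm δ' (pact τ Y), hpl, hδτ, ip_sub_right, ip_smul_right,
      ip_comm Y δ']
  have h5 : ip δ' (Y - δ') = ip δ' Y - ip δ' δ' := ip_sub_right _ _ _
  rw [h1, h2, h3, h4, h5]; ring
end Stmt2Aux

namespace Stmt2Aux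
variable {r p : ℕ}

lemma memQ_pact (σ : Equiv.Perm (Fin r)) {β : Fin r → ℚ} (h : memQ β) :
    memQ (pact σ β) := by
  refine ⟨(Equiv.sum_comp σ⁻¹ β).trans h.1, fun i => h.2 _⟩

lemma memQ_gamv (h0 : 0 < r) (hp : p < r) (hp1 : 1 ≤ p) : memQ (gamv r p) := by
  constructor
  · unfold memV gamv
    simp only [show ∀ j : Fin r, ((j : ℕ) = 0) = (j = ⟨0, h0⟩) from fun j => by
        rw [Fin.ext_iff],
      show ∀ j : Fin r, ((j : ℕ) = p) = (j = ⟨p, hp⟩) from fun j => by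
        rw [Fin.ext_iff]]
    simp [Finset.sum_sub_distrib, Finset.sum_ite_eq']
  · intro i
    refine ⟨(if (i : ℕ) = 0 then 1 else 0) - (if (i : ℕ) = p then 1 else 0), ?_⟩
    unfold gamv
    split_ifs <;> norm_num

lemma memQ_add {u v : Fin r → ℚ} (hu : memQ u) (hv : memQ v) : memQ (u + v) := by
  constructor
  · unfold memV at *
    simpa [Finset.sum_add_distrib] using by rw [hu.1, hv.1, add_zero]
  · intro i
    obtain ⟨m, hm⟩ := hu.2 i
    obtain ⟨n, hn⟩ := hv.2 i
    exact ⟨m + n, by simp [hm, hn]⟩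

lemma pact_invol (h0 : 0 < r) (hp : p < r) (v : Fin r → ℚ) :
    pact (Equiv.swap (⟨0, h0⟩ : Fin r) ⟨p, hp⟩)
      (pact (Equiv.swap (⟨0, h0⟩ : Fin r) ⟨p, hp⟩) v) = v := by
  rw [← pact_mul, Equiv.swap_mul_self, pact_one]

lemma invol (h0 : 0 < r) (hp : p < r) (hp1 : 1 ≤ p) (α : Fin r → ℚ) :
    pact (Equiv.swap (⟨0, h0⟩ : Fin r) ⟨p, hp⟩)
        (pact (Equiv.swap (⟨0, h0⟩ : Fin r) ⟨p, hp⟩) α + gamv r p) + gamv r p = α := by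
  rw [pact_add, pact_invol h0 hp, pact_swap_gam h0 hp hp1]
  funext i; simp

end Stmt2Aux


/-- with `τ = (1, p+1)`, for every `x ∈ ℚ` there is a bijection between
`{α ∈ μ + Q_r : E(α,w) = x}` and `{α ∈ τ•μ + Q_r : E(α, τ∘w) = x}`. -/
theorem stmt2 (r p p' : ℕ) (hr : 2 ≤ r) (hp1 : 1 ≤ p) (hpr : p ≤ r - 1) (hpp' : p < p')
    (μ : Fin r → ℚ) (hμ : memP μ) (w : Equiv.Perm (Fin r)) (x : ℚ) :
    Nonempty
      ({α : Fin r → ℚ // (∃ β, memQ β ∧ α = μ + β) ∧ Eexp r p p' α w = x} ≃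
        {α : Fin r → ℚ //
          (∃ β, memQ β ∧
            α = pact (Equiv.swap (⟨0, by omega⟩ : Fin r) (⟨p, by omega⟩ : Fin r)) μ + β) ∧
          Eexp r p p' α
            (Equiv.swap (⟨0, by omega⟩ : Fin r) (⟨p, by omega⟩ : Fin r) * w) = x}) := by
  have h0 : 0 < r := by omega
  have hp : p < r := by omega
  set τ : Equiv.Perm (Fin r) := Equiv.swap (⟨0, h0⟩ : Fin r) ⟨p, hp⟩ with hτdef
  set G : Fin r → ℚ := Stmt2Aux.gamv r p with hGdef
  have key : ∀ (α : Fin r → ℚ), Eexp r p p' (pact τ α + G) (τ * w) = Eexp r p p' α w :=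
    fun α => Stmt2Aux.Eexp_key r p p' h0 hp hp1 α w
  have hinv : ∀ α : Fin r → ℚ, pact τ (pact τ α + G) + G = α :=
    Stmt2Aux.invol h0 hp hp1
  have hττ : ∀ v : Fin r → ℚ, pact τ (pact τ v) = v := Stmt2Aux.pact_invol h0 hp
  refine ⟨{
    toFun := fun a => ⟨pact τ a.1 + G, ?_, ?_⟩
    invFun := fun a => ⟨pact τ a.1 + G, ?_, ?_⟩
    left_inv := fun a => Subtype.ext (hinv a.1)
    right_inv := fun a => Subtype.ext (hinv a.1) }⟩
  · obtain ⟨β, hβ, hα⟩ := a.2.1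
    refine ⟨pact τ β + G, Stmt2Aux.memQ_add (Stmt2Aux.memQ_pact τ hβ)
      (Stmt2Aux.memQ_gamv h0 hp hp1), ?_⟩
    rw [hα, Stmt2Aux.pact_add]
    funext i; simp [add_assoc]
  · rw [key a.1]
    exact a.2.2
  · obtain ⟨β, hβ, hα⟩ := a.2.1
    refine ⟨pact τ β + G, Stmt2Aux.memQ_add (Stmt2Aux.memQ_pact τ hβ)
      (Stmt2Aux.memQ_gamv h0 hp hp1), ?_⟩
    rw [hα, Stmt2Aux.pact_add, hττ μ]
    funext i; simp [add_assoc]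
  · rw [← key (pact τ a.1 + G), hinv a.1]
    exact a.2.2
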